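/- For every β > −1, every k ≥ 1, and every λ ∈ (0,1], the filter function g_k(λ) = (1 − r_k(λ))/λ of the Nesterov iteration satisfies |g_k(λ)| ≤ (k+1)/2 + (k−1)². -/

import Mathlib

/-- Momentum sequence `α_k = (k-1)/(k+β)`. -/
noncomputable def nesterovAlpha (β : ℝ) (k : ℕ) : ℝ := ((k : ℝ) - 1) / ((k : ℝ) + β)

/-- Residual polynomials of Nesterov's accelerated Landweber iteration. -/
noncomputable def nesterovRes (β : ℝ) : ℕ → ℝ → ℝ
  | 0, _ => 1
  | 1, l => 1 - l
  | (k + 2), l =>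
      (1 - l) * (nesterovRes β (k + 1) l +
        nesterovAlpha β (k + 1) * (nesterovRes β (k + 1) l - nesterovRes β k l))

lemma nesterovAlpha_nonneg (β : ℝ) (hβ : -1 < β) (k : ℕ) (hk : 1 ≤ k) :
    0 ≤ nesterovAlpha β k := by
  have hk1 : (1 : ℝ) ≤ (k : ℝ) := by exact_mod_cast hk
  apply div_nonneg <;> linarith

lemma nesterovAlpha_le_one (β : ℝ) (hβ : -1 < β) (k : ℕ) (hk : 1 ≤ k) :
    nesterovAlpha β k ≤ 1 := by
  have hk1 : (1 : ℝ) ≤ (k : ℝ) := by exact_mod_cast hk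
  rw [nesterovAlpha, div_le_one (by linarith)]
  linarith

/-- Lyapunov step: `V = l r² + (1-l) d²` does not increase. -/
lemma nesterov_step_lyap (l x y a : ℝ) (hl0 : 0 < l) (hl1 : l ≤ 1) (ha0 : 0 ≤ a) (ha1 : a ≤ 1)
    (hV : l * y ^ 2 + (1 - l) * (y - x) ^ 2 ≤ l) :
    l * ((1 - l) * (y + a * (y - x))) ^ 2
      + (1 - l) * ((1 - l) * (y + a * (y - x)) - y) ^ 2 ≤ l := by
  have hid : l * ((1 - l) * (y + a * (y - x))) ^ 2
      + (1 - l) * ((1 - l) * (y + a * (y - x)) - y) ^ 2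
      = (1 - l) * (l * y ^ 2 + a ^ 2 * (1 - l) * (y - x) ^ 2) := by ring
  rw [hid]
  have h1 : (1 - l) * (l * y ^ 2) ≤ l * y ^ 2 := by
    nlinarith [mul_nonneg hl0.le (sq_nonneg y)]
  have h2 : (1 - l) * (a ^ 2 * (1 - l) * (y - x) ^ 2) ≤ (1 - l) * (y - x) ^ 2 := by
    have haa : a ^ 2 * (1 - l) ≤ 1 := by nlinarith
    have := mul_le_mul_of_nonneg_left haa
      (mul_nonneg (show (0:ℝ) ≤ 1 - l by linarith) (sq_nonneg (y - x)))
    nlinarith [this]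
  nlinarith

/-- Difference step. -/
lemma nesterov_step_diff (l x y a c : ℝ) (hl0 : 0 < l) (hl1 : l ≤ 1) (ha0 : 0 ≤ a)
    (ha1 : a ≤ 1) (hy : |y| ≤ 1) (hd : |y - x| ≤ c * l) :
    |y - (1 - l) * (y + a * (y - x))| ≤ (c + 1) * l := by
  have hrw : y - (1 - l) * (y + a * (y - x)) = l * y - ((1 - l) * a) * (y - x) := by ring
  rw [hrw]
  have t1 : |l * y| ≤ l := by
    rw [abs_mul, abs_of_pos hl0]; exact mul_le_of_le_one_right hl0.le hy
  have t2 : |((1 - l) * a) * (y - x)| ≤ c * l := by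
    rw [abs_mul, abs_of_nonneg (mul_nonneg (by linarith) ha0)]
    calc (1 - l) * a * |y - x| ≤ 1 * (c * l) :=
      mul_le_mul (by nlinarith) hd (abs_nonneg _) zero_le_one
      _ = c * l := one_mul _
  calc |l * y - ((1 - l) * a) * (y - x)| ≤ |l * y| + |((1 - l) * a) * (y - x)| :=
        abs_sub _ _
    _ ≤ l + c * l := add_le_add t1 t2
    _ = (c + 1) * l := by ring

/-- Key joint induction: Lyapunov bound, difference bound, and cumulative bound. -/
lemma nesterov_key (β : ℝ) (hβ : -1 < β) (l : ℝ) (hl0 : 0 < l) (hl1 : l ≤ 1) :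
    ∀ m : ℕ,
      l * (nesterovRes β (m + 1) l) ^ 2
        + (1 - l) * (nesterovRes β (m + 1) l - nesterovRes β m l) ^ 2 ≤ l ∧
      |nesterovRes β m l - nesterovRes β (m + 1) l| ≤ ((m : ℝ) + 1) * l ∧
      |1 - nesterovRes β (m + 1) l| ≤ l * ((m : ℝ) + 1) * ((m : ℝ) + 2) / 2 := by
  intro m
  induction m with
  | zero =>
    simp only [nesterovRes, Nat.cast_zero]
    refine ⟨by nlinarith [sq_nonneg (1 - l), sq_nonneg l], ?_, ?_⟩
    · rw [show (1 : ℝ) - (1 - l) = l by ring, abs_of_pos hl0]; linarith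
    · rw [show (1 : ℝ) - (1 - l) = l by ring, abs_of_pos hl0]; nlinarith
  | succ m ih =>
    obtain ⟨hV, hD, hS⟩ := ih
    set x := nesterovRes β m l with hx
    set y := nesterovRes β (m + 1) l with hy
    set a := nesterovAlpha β (m + 1) with ha
    have ha0 : 0 ≤ a := nesterovAlpha_nonneg β hβ (m + 1) (Nat.le_add_left 1 m)
    have ha1 : a ≤ 1 := nesterovAlpha_le_one β hβ (m + 1) (Nat.le_add_left 1 m)
    have hz : nesterovRes β (m + 2) l = (1 - l) * (y + a * (y - x)) := by
      simp only [nesterovRes]; rfl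
    set z := nesterovRes β (m + 2) l with hzz
    clear_value x y a z
    subst hz
    -- |y| ≤ 1 from the Lyapunov bound
    have hyabs : |y| ≤ 1 := by
      have hy2 : y ^ 2 ≤ 1 := by nlinarith [sq_nonneg (y - x)]
      exact abs_le_one_iff_mul_self_le_one.2 (by nlinarith)
    have hyx : |y - x| ≤ ((m : ℝ) + 1) * l := by rw [abs_sub_comm]; exact hD
    have hDnew := nesterov_step_diff l x y a ((m : ℝ) + 1) hl0 hl1 ha0 ha1 hyabs hyx
    refine ⟨nesterov_step_lyap l x y a hl0 hl1 ha0 ha1 hV, ?_, ?_⟩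
    · calc |y - (1 - l) * (y + a * (y - x))| ≤ (((m : ℝ) + 1) + 1) * l := hDnew
        _ = ((↑(m + 1) : ℝ) + 1) * l := by push_cast; ring
    · calc |1 - (1 - l) * (y + a * (y - x))|
          = |(1 - y) + (y - (1 - l) * (y + a * (y - x)))| := by ring_nf
        _ ≤ |1 - y| + |y - (1 - l) * (y + a * (y - x))| := abs_add_le _ _
        _ ≤ l * ((m : ℝ) + 1) * ((m : ℝ) + 2) / 2 + (((m : ℝ) + 1) + 1) * l :=
            add_le_add hS hDnew
        _ = l * ((↑(m + 1) : ℝ) + 1) * ((↑(m + 1) : ℝ) + 2) / 2 := by push_cast; ring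

theorem nesterov_filter_bound (β : ℝ) (hβ : -1 < β) (k : ℕ) (hk : 1 ≤ k)
    (l : ℝ) (hl : l ∈ Set.Ioc (0 : ℝ) 1) :
    |(1 - nesterovRes β k l) / l| ≤ ((k : ℝ) + 1) / 2 + ((k : ℝ) - 1) ^ 2 := by
  obtain ⟨hl0, hl1⟩ := hl
  by_cases hk2 : k = 2
  · -- special case k = 2 : α₁ = 0, r₂ = (1-l)²
    subst hk2
    have ha : nesterovAlpha β 1 = 0 := by simp [nesterovAlpha]
    have hr2 : nesterovRes β 2 l = (1 - l) * (1 - l) := by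
      show (1 - l) * (nesterovRes β 1 l + nesterovAlpha β 1 *
        (nesterovRes β 1 l - nesterovRes β 0 l)) = _
      simp [nesterovRes, ha]
    rw [hr2]
    have : (1 - (1 - l) * (1 - l)) / l = 2 - l := by
      field_simp; ring
    rw [this, abs_of_nonneg (by linarith)]
    norm_num; linarith
  · -- general case via |1 - r_k| ≤ l k (k+1)/2
    obtain ⟨m, rfl⟩ : ∃ m, k = m + 1 := ⟨k - 1, (Nat.succ_pred_eq_of_pos hk).symm⟩
    have hS := (nesterov_key β hβ l hl0 hl1 m).2.2
    have habs : |(1 - nesterovRes β (m + 1) l) / l|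
        = |1 - nesterovRes β (m + 1) l| / l := by
      rw [abs_div, abs_of_pos hl0]
    rw [habs]
    have hbound : |1 - nesterovRes β (m + 1) l| / l
        ≤ ((m : ℝ) + 1) * ((m : ℝ) + 2) / 2 := by
      rw [div_le_iff₀ hl0]
      calc |1 - nesterovRes β (m + 1) l| ≤ l * ((m : ℝ) + 1) * ((m : ℝ) + 2) / 2 := hS
        _ = ((m : ℝ) + 1) * ((m : ℝ) + 2) / 2 * l := by ring
    refine hbound.trans ?_
    have hm : m = 0 ∨ 2 ≤ m := by omega
    push_cast
    rcases hm with rfl | hm2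
    · norm_num
    · have : (2 : ℝ) ≤ (m : ℝ) := by exact_mod_cast hm2
      nlinarith
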